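/- arXiv:2403.14555 — 6 statements merged into one kernel-verified Lean document; each statement's English description precedes it below -/
import Mathlib

section
/- If a > 0, b ∈ (0,1), and φ(γ) = a·γ^b agrees with log₂(1+γ) at two points 0 < γ₁ < γ₂, then φ(γ) ≤ log₂(1+γ) for all γ ∈ [γ₁, γ₂]. -/
open Real Set

private noncomputable def auxh (b x : ℝ) : ℝ := x / (1 + x) - b * Real.log (1 + x)

private lemma auxh_hasDerivAt (b x : ℝ) (hx : 0 < x) :
    HasDerivAt (auxh b) (1 / (1 + x) ^ 2 - b / (1 + x)) x := by
  have h1 : (0:ℝ) < 1 + x := by linarith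
  have hd1 : HasDerivAt (fun x : ℝ => x / (1 + x)) (1 / (1 + x) ^ 2) x := by
    have := (hasDerivAt_id x).div ((hasDerivAt_id x).const_add 1) (ne_of_gt h1)
    refine this.congr_deriv ?_
    simp only [id]
    field_simp
    ring
  have hd2 : HasDerivAt (fun x : ℝ => Real.log (1 + x)) (1 / (1 + x)) x := by
    have := (Real.hasDerivAt_log (ne_of_gt h1)).comp x ((hasDerivAt_id x).const_add 1)
    exact this.congr_deriv (by simp)
  have := hd1.sub (hd2.const_mul b)
  refine this.congr_deriv ?_
  ring

/-- single sign change of h : once nonpositive, stays nonpositive -/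
private lemma auxh_sign (b : ℝ) (hb0 : 0 < b) (hb1 : b < 1) :
    ∀ x y : ℝ, 0 < x → x ≤ y → auxh b x ≤ 0 → auxh b y ≤ 0 := by
  intro x y hx hxy hhx
  set s : ℝ := 1 / b - 1 with hs
  have hs0 : 0 < s := by
    rw [hs, sub_pos, lt_div_iff₀ hb0]
    linarith
  -- h is strictly positive on (0, s]
  have hpos : ∀ z : ℝ, 0 < z → z ≤ s → 0 < auxh b z := by
    intro z hz hzs
    have hmono : StrictMonoOn (auxh b) (Icc 0 s) := by
      apply strictMonoOn_of_deriv_pos (convex_Icc 0 s)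
      · apply ContinuousOn.sub
        · exact (continuousOn_id.div (continuousOn_const.add continuousOn_id)
            (fun t ht => by have := ht.1; dsimp; linarith))
        · exact continuousOn_const.mul
            ((continuousOn_const.add continuousOn_id).log
              (fun t ht => by have := ht.1; dsimp; linarith))
      · intro t ht
        rw [interior_Icc] at ht
        rw [(auxh_hasDerivAt b t ht.1).deriv]
        have h1t : (0:ℝ) < 1 + t := by linarith [ht.1]
        have hlt : b * (1 + t) < 1 := by
          have : t < 1 / b - 1 := ht.2
          have h2 : b * (1 + t) < b * (1 / b) := by
            apply mul_lt_mul_of_pos_left _ hb0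
            have : 1 + t < 1 / b := by linarith
            exact this
          rwa [mul_one_div_cancel (ne_of_gt hb0)] at h2
        rw [div_sub_div _ _ (by positivity) (ne_of_gt h1t)]
        apply div_pos
        · nlinarith
        · positivity
    have h0 : auxh b 0 = 0 := by simp [auxh]
    have := hmono (by constructor <;> [exact le_refl 0; exact le_of_lt (lt_of_lt_of_le hz hzs)] : (0:ℝ) ∈ Icc 0 s) ⟨le_of_lt hz, hzs⟩ hz
    rwa [h0] at this
  -- h is antitone on [s, ∞)
  have hanti : AntitoneOn (auxh b) (Ici s) := by
    apply antitoneOn_of_deriv_nonpos (convex_Ici s)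
    · apply ContinuousOn.sub
      · exact (continuousOn_id.div (continuousOn_const.add continuousOn_id)
          (fun t ht => by have : s ≤ t := ht; dsimp; linarith))
      · exact continuousOn_const.mul
          ((continuousOn_const.add continuousOn_id).log
            (fun t ht => by have : s ≤ t := ht; dsimp; linarith))
    · intro t ht
      rw [interior_Ici] at ht
      exact ((auxh_hasDerivAt b t (lt_trans hs0 ht)).differentiableAt).differentiableWithinAt
    · intro t ht
      rw [interior_Ici] at ht
      rw [(auxh_hasDerivAt b t (lt_trans hs0 ht)).deriv]
      have h1t : (0:ℝ) < 1 + t := by linarith [lt_trans hs0 ht]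
      have hge : 1 ≤ b * (1 + t) := by
        have : 1 / b - 1 < t := ht
        have h2 : b * (1 / b) ≤ b * (1 + t) := by
          apply mul_le_mul_of_nonneg_left _ (le_of_lt hb0)
          linarith
        rwa [mul_one_div_cancel (ne_of_gt hb0)] at h2
      rw [div_sub_div _ _ (by positivity) (ne_of_gt h1t)]
      apply div_nonpos_of_nonpos_of_nonneg
      · nlinarith
      · positivity
  -- now: x must be ≥ s (else h x > 0)
  by_cases hxs : x ≤ s
  · exact absurd (hpos x hx hxs) (not_lt.mpr hhx)
  · push_neg at hxs
    have := hanti (le_of_lt hxs) (le_trans (le_of_lt hxs) hxy) hxy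
    linarith

private lemma auxg_hasDerivAt (b x : ℝ) (hx : 0 < x) :
    HasDerivAt (fun x : ℝ => Real.log (1 + x) * x ^ (-b))
      (x ^ (-b - 1) * auxh b x) x := by
  have h1 : (0:ℝ) < 1 + x := by linarith
  have hd2 : HasDerivAt (fun x : ℝ => Real.log (1 + x)) (1 / (1 + x)) x := by
    have := (Real.hasDerivAt_log (ne_of_gt h1)).comp x ((hasDerivAt_id x).const_add 1)
    exact this.congr_deriv (by simp)
  have hdr : HasDerivAt (fun x : ℝ => x ^ (-b)) (-b * x ^ (-b - 1)) x :=
    Real.hasDerivAt_rpow_const (Or.inl (ne_of_gt hx))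
  have := hd2.mul hdr
  refine this.congr_deriv ?_
  have hsplit : x ^ (-b) = x ^ (-b - 1) * x := by
    rw [← Real.rpow_add_one (ne_of_gt hx) (-b - 1)]
    ring_nf
  rw [hsplit, auxh]
  field_simp
  ring

theorem stmt_2 (a b γ₁ γ₂ : ℝ) (ha : 0 < a) (hb0 : 0 < b) (hb1 : b < 1)
    (h1 : 0 < γ₁) (h12 : γ₁ < γ₂)
    (e1 : a * γ₁ ^ b = Real.logb 2 (1 + γ₁))
    (e2 : a * γ₂ ^ b = Real.logb 2 (1 + γ₂)) :
    ∀ γ ∈ Icc γ₁ γ₂, a * γ ^ b ≤ Real.logb 2 (1 + γ) := by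
  have hlog2 : (0:ℝ) < Real.log 2 := Real.log_pos (by norm_num)
  set c : ℝ := a * Real.log 2 with hc
  set g : ℝ → ℝ := fun x => Real.log (1 + x) * x ^ (-b) with hg
  -- values at endpoints
  have hval : ∀ z : ℝ, 0 < z → a * z ^ b = Real.logb 2 (1 + z) → g z = c := by
    intro z hz hez
    have hlz : Real.log (1 + z) = c * z ^ b := by
      rw [Real.logb, eq_div_iff (ne_of_gt hlog2)] at hez
      rw [← hez]; ring
    have : z ^ b * z ^ (-b) = 1 := by
      rw [← Real.rpow_add hz]; simp
    simp only [hg, hlz]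
    calc c * z ^ b * z ^ (-b) = c * (z ^ b * z ^ (-b)) := by ring
      _ = c := by rw [this, mul_one]
  have hg1 : g γ₁ = c := hval γ₁ h1 e1
  have hg2 : g γ₂ = c := hval γ₂ (lt_trans h1 h12) e2
  intro γ hγ
  obtain ⟨hγ1, hγ2⟩ := hγ
  have hγ0 : 0 < γ := lt_of_lt_of_le h1 hγ1
  -- main claim : g γ ≥ c
  have key : c ≤ g γ := by
    by_cases hh : auxh b γ ≤ 0
    · -- h ≤ 0 on [γ, γ₂], so g antitone there, g γ ≥ g γ₂ = c
      have hanti : AntitoneOn g (Icc γ γ₂) := by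
        apply antitoneOn_of_deriv_nonpos (convex_Icc γ γ₂)
        · intro t ht
          exact (auxg_hasDerivAt b t (lt_of_lt_of_le hγ0 ht.1)).continuousAt.continuousWithinAt
        · intro t ht
          rw [interior_Icc] at ht
          exact (auxg_hasDerivAt b t (lt_trans hγ0 ht.1)).differentiableAt.differentiableWithinAt
        · intro t ht
          rw [interior_Icc] at ht
          rw [(auxg_hasDerivAt b t (lt_trans hγ0 ht.1)).deriv]
          have hht : auxh b t ≤ 0 := auxh_sign b hb0 hb1 γ t hγ0 (le_of_lt ht.1) hh
          have : (0:ℝ) < t ^ (-b - 1) := Real.rpow_pos_of_pos (lt_trans hγ0 ht.1) _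
          exact mul_nonpos_of_nonneg_of_nonpos (le_of_lt this) hht
      have := hanti ⟨le_refl γ, hγ2⟩ ⟨hγ2, le_refl γ₂⟩ hγ2
      rw [hg2] at this; exact this
    · push_neg at hh
      -- h > 0 on (0, γ], so g monotone on [γ₁, γ], g γ ≥ g γ₁ = c
      have hmono : MonotoneOn g (Icc γ₁ γ) := by
        apply monotoneOn_of_deriv_nonneg (convex_Icc γ₁ γ)
        · intro t ht
          exact (auxg_hasDerivAt b t (lt_of_lt_of_le h1 ht.1)).continuousAt.continuousWithinAt
        · intro t ht
          rw [interior_Icc] at ht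
          exact (auxg_hasDerivAt b t (lt_trans h1 ht.1)).differentiableAt.differentiableWithinAt
        · intro t ht
          rw [interior_Icc] at ht
          rw [(auxg_hasDerivAt b t (lt_trans h1 ht.1)).deriv]
          have hht : 0 < auxh b t := by
            by_contra hcon
            push_neg at hcon
            exact absurd (auxh_sign b hb0 hb1 t γ (lt_trans h1 ht.1) (le_of_lt ht.2) hcon)
              (not_le.mpr hh)
          have : (0:ℝ) < t ^ (-b - 1) := Real.rpow_pos_of_pos (lt_trans h1 ht.1) _
          positivity
      have := hmono ⟨le_refl γ₁, hγ1⟩ ⟨hγ1, le_refl γ⟩ hγ1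
      rw [hg1] at this; exact this
  -- convert back
  have hγb : (0:ℝ) < γ ^ b := Real.rpow_pos_of_pos hγ0 b
  have hlg : c * γ ^ b ≤ Real.log (1 + γ) := by
    have h2 : c * γ ^ b ≤ g γ * γ ^ b := mul_le_mul_of_nonneg_right key (le_of_lt hγb)
    have h3 : g γ * γ ^ b = Real.log (1 + γ) := by
      simp only [hg]
      rw [mul_assoc, ← Real.rpow_add hγ0]
      simp
    rwa [h3] at h2
  rw [Real.logb, le_div_iff₀ hlog2]
  calc a * γ ^ b * Real.log 2 = c * γ ^ b := by rw [hc]; ring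
    _ ≤ Real.log (1 + γ) := hlg
end

section
/- If a > 0, b ∈ (0,1), and φ(γ) = a·γ^b agrees with log₂(1+γ) at two points 0 < γ₁ < γ₂, then φ(γ) ≥ log₂(1+γ) for all γ ∈ (0, γ₁] and φ(γ) ≥ log₂(1+γ) for all γ ≥ γ₂. -/
open Real Set


-- g(x) = (1+x)log(1+x)/x strictly mono on Ioi 0
lemma aux_g_mono : StrictMonoOn (fun x : ℝ => (1+x) * Real.log (1+x) / x) (Ioi 0) := by
  have hderiv : ∀ x : ℝ, 0 < x →
      HasDerivAt (fun x : ℝ => (1+x) * Real.log (1+x) / x)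
        ((x - Real.log (1+x)) / x ^ 2) x := by
    intro x hx
    have h1 : (0:ℝ) < 1 + x := by linarith
    have hnum : HasDerivAt (fun x : ℝ => (1+x) * Real.log (1+x))
        (Real.log (1+x) + 1) x := by
      have ha : HasDerivAt (fun x : ℝ => 1 + x) 1 x := by
        simpa using (hasDerivAt_id x).const_add 1
      have hl : HasDerivAt (fun x : ℝ => Real.log (1+x)) (1 / (1+x)) x := by
        simpa using ha.log h1.ne'
      have := ha.mul hl
      convert this using 1
      · rfl
      · rfl
      · rfl
      · rw [one_mul, mul_one_div_cancel h1.ne']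
    have := hnum.div (hasDerivAt_id x) hx.ne'
    convert this using 1
    · rfl
    · rfl
    · rfl
    · simp only [id_eq]
      ring
  refine strictMonoOn_of_deriv_pos (convex_Ioi 0) ?_ ?_
  · intro x hx
    exact ((hderiv x hx).continuousAt).continuousWithinAt
  · intro x hx
    rw [interior_Ioi] at hx
    have hx' : (0:ℝ) < x := hx
    rw [(hderiv x hx').deriv]
    have h1 : (0:ℝ) < 1 + x := by linarith
    have hlt : Real.log (1+x) < x := by
      have := Real.log_lt_sub_one_of_pos h1 (by linarith)
      linarith
    exact div_pos (by linarith) (by positivity)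


lemma aux_hasDeriv (u : ℝ) :
    HasDerivAt (fun u : ℝ => Real.log (Real.log (1 + Real.exp u)))
      (Real.exp u / ((1 + Real.exp u) * Real.log (1 + Real.exp u))) u := by
  have hx : (0:ℝ) < Real.exp u := Real.exp_pos u
  have h1 : (0:ℝ) < 1 + Real.exp u := by linarith
  have hl : (0:ℝ) < Real.log (1 + Real.exp u) := Real.log_pos (by linarith)
  have ha : HasDerivAt (fun u : ℝ => 1 + Real.exp u) (Real.exp u) u :=
    (Real.hasDerivAt_exp u).const_add 1
  have hb : HasDerivAt (fun u : ℝ => Real.log (1 + Real.exp u))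
      (Real.exp u / (1 + Real.exp u)) u := ha.log h1.ne'
  have := hb.log hl.ne'
  convert this using 1
  rw [div_div]

lemma aux_concave :
    ConcaveOn ℝ univ (fun u : ℝ => Real.log (Real.log (1 + Real.exp u))) := by
  have hdiff : Differentiable ℝ (fun u : ℝ => Real.log (Real.log (1 + Real.exp u))) :=
    fun u => (aux_hasDeriv u).differentiableAt
  refine Antitone.concaveOn_univ_of_deriv hdiff ?_
  intro u v huv
  rw [(aux_hasDeriv u).deriv, (aux_hasDeriv v).deriv]
  rcases eq_or_lt_of_le huv with h | h
  · rw [h]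
  · have hx : (0:ℝ) < Real.exp u := Real.exp_pos u
    have hy : (0:ℝ) < Real.exp v := Real.exp_pos v
    have hxy : Real.exp u < Real.exp v := Real.exp_lt_exp.2 h
    set x := Real.exp u
    set y := Real.exp v
    have hgx : (1+x) * Real.log (1+x) / x < (1+y) * Real.log (1+y) / y :=
      aux_g_mono hx hy hxy
    have hlx : (0:ℝ) < Real.log (1+x) := Real.log_pos (by linarith)
    have hly : (0:ℝ) < Real.log (1+y) := Real.log_pos (by linarith)
    have hpx : (0:ℝ) < (1+x) * Real.log (1+x) := by positivity
    have hpy : (0:ℝ) < (1+y) * Real.log (1+y) := by positivity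
    rw [div_lt_div_iff₀ hx hy] at hgx
    rw [div_le_div_iff₀ hpy hpx]
    nlinarith

lemma aux_secant_left {F : ℝ → ℝ} (C : ConcaveOn ℝ univ F) {c m u u₁ u₂ : ℝ}
    (h : u ≤ u₁) (h' : u₁ < u₂) (H1 : F u₁ = c + m * u₁) (H2 : F u₂ = c + m * u₂) :
    F u ≤ c + m * u := by
  rcases eq_or_lt_of_le h with rfl | h
  · exact H1.le
  · have hden : (0:ℝ) < u₂ - u := by linarith
    have ht : 0 < (u₂ - u₁) / (u₂ - u) := div_pos (by linarith) hden
    have hs : 0 < (u₁ - u) / (u₂ - u) := div_pos (by linarith) hden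
    have hts : (u₂ - u₁) / (u₂ - u) + (u₁ - u) / (u₂ - u) = 1 := by field_simp; ring
    have hcomb : ((u₂ - u₁) / (u₂ - u)) * u + ((u₁ - u) / (u₂ - u)) * u₂ = u₁ := by
      field_simp; ring
    have hc := C.2 (mem_univ u) (mem_univ u₂) ht.le hs.le hts
    simp only [smul_eq_mul] at hc
    rw [hcomb, H1, H2] at hc
    have hl : c + m * u₁ = ((u₂ - u₁) / (u₂ - u)) * (c + m * u)
        + ((u₁ - u) / (u₂ - u)) * (c + m * u₂) := by
      field_simp; ring
    rw [hl] at hc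
    have h2 : ((u₂ - u₁) / (u₂ - u)) * (F u) ≤ ((u₂ - u₁) / (u₂ - u)) * (c + m * u) := by
      linarith
    exact le_of_mul_le_mul_left h2 ht

lemma aux_secant_right {F : ℝ → ℝ} (C : ConcaveOn ℝ univ F) {c m u u₁ u₂ : ℝ}
    (h : u₂ ≤ u) (h' : u₁ < u₂) (H1 : F u₁ = c + m * u₁) (H2 : F u₂ = c + m * u₂) :
    F u ≤ c + m * u := by
  rcases eq_or_lt_of_le h with rfl | h
  · exact H2.le
  · have hden : (0:ℝ) < u - u₁ := by linarith
    have ht : 0 < (u - u₂) / (u - u₁) := div_pos (by linarith) hden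
    have hs : 0 < (u₂ - u₁) / (u - u₁) := div_pos (by linarith) hden
    have hts : (u - u₂) / (u - u₁) + (u₂ - u₁) / (u - u₁) = 1 := by field_simp; ring
    have hcomb : ((u - u₂) / (u - u₁)) * u₁ + ((u₂ - u₁) / (u - u₁)) * u = u₂ := by
      field_simp; ring
    have hc := C.2 (mem_univ u₁) (mem_univ u) ht.le hs.le hts
    simp only [smul_eq_mul] at hc
    rw [hcomb, H1, H2] at hc
    have hl : c + m * u₂ = ((u - u₂) / (u - u₁)) * (c + m * u₁)
        + ((u₂ - u₁) / (u - u₁)) * (c + m * u) := by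
      field_simp; ring
    rw [hl] at hc
    have h2 : ((u₂ - u₁) / (u - u₁)) * (F u) ≤ ((u₂ - u₁) / (u - u₁)) * (c + m * u) := by
      linarith
    exact le_of_mul_le_mul_left h2 hs

theorem stmt_3 (a b γ₁ γ₂ : ℝ) (ha : 0 < a) (hb0 : 0 < b) (hb1 : b < 1)
    (h1 : 0 < γ₁) (h12 : γ₁ < γ₂)
    (e1 : a * γ₁ ^ b = Real.logb 2 (1 + γ₁))
    (e2 : a * γ₂ ^ b = Real.logb 2 (1 + γ₂)) :
    (∀ γ ∈ Ioc 0 γ₁, a * γ ^ b ≥ Real.logb 2 (1 + γ)) ∧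
    (∀ γ, γ₂ ≤ γ → a * γ ^ b ≥ Real.logb 2 (1 + γ)) := by
  have hlog2 : (0:ℝ) < Real.log 2 := Real.log_pos one_lt_two
  set F : ℝ → ℝ := fun u : ℝ => Real.log (Real.log (1 + Real.exp u)) with hF
  have C : ConcaveOn ℝ univ F := aux_concave
  set c : ℝ := Real.log a + Real.log (Real.log 2) with hc
  -- the line value equals log (a * γ^b * log 2)
  have hline : ∀ γ : ℝ, 0 < γ → c + b * Real.log γ = Real.log (a * γ ^ b * Real.log 2) := by
    intro γ hγ
    rw [Real.log_mul (by positivity) hlog2.ne', Real.log_mul ha.ne' (by positivity),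
      Real.log_rpow hγ b]
    ring
  have hFval : ∀ γ : ℝ, 0 < γ → F (Real.log γ) = Real.log (Real.log (1 + γ)) := by
    intro γ hγ
    simp [hF, Real.exp_log hγ]
  -- equality at the two intersection points
  have hEq : ∀ γ : ℝ, 0 < γ → a * γ ^ b = Real.logb 2 (1 + γ) →
      F (Real.log γ) = c + b * Real.log γ := by
    intro γ hγ he
    rw [hFval γ hγ, hline γ hγ]
    congr 1
    rw [Real.logb, eq_div_iff hlog2.ne'] at he
    linarith [he]
  have H1 := hEq γ₁ h1 e1
  have H2 := hEq γ₂ (h1.trans h12) e2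
  have h12' : Real.log γ₁ < Real.log γ₂ := Real.log_lt_log h1 h12
  -- conversion from the log-log inequality back
  have hback : ∀ γ : ℝ, 0 < γ → F (Real.log γ) ≤ c + b * Real.log γ →
      a * γ ^ b ≥ Real.logb 2 (1 + γ) := by
    intro γ hγ hle
    rw [hFval γ hγ, hline γ hγ] at hle
    have h1γ : (0:ℝ) < Real.log (1 + γ) := Real.log_pos (by linarith)
    have := (Real.log_le_log_iff h1γ (by positivity)).1 hle
    rw [Real.logb, ge_iff_le, div_le_iff₀ hlog2]
    linarith
  constructor
  · rintro γ ⟨hγ0, hγ1⟩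
    exact hback γ hγ0 (aux_secant_left C (Real.log_le_log hγ0 hγ1) h12' H1 H2)
  · intro γ hγ
    have hγ0 : 0 < γ := lt_of_lt_of_le (h1.trans h12) hγ
    exact hback γ hγ0 (aux_secant_right C (Real.log_le_log (h1.trans h12) hγ) h12' H1 H2)
end

section
/- A power function φ(γ) = a·γ^b with a > 0, b ∈ (0,1) and two strictly monotone concave functions of this form cannot coincide with log₂(1+γ) at three distinct positive points: the only contact points of φ with log₂(1+γ) on [0,∞) are 0 (limit), γ₁, and γ₂. -/
open Real Set

-- derivative of φ x = x/(1+x) - b * log (1+x)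
lemma phi_deriv (b x : ℝ) (hx : -1 < x) :
    HasDerivAt (fun y => y / (1 + y) - b * Real.log (1 + y))
      ((1 - b * (1 + x)) / (1 + x) ^ 2) x := by
  have hne : (1 : ℝ) + x ≠ 0 := by linarith
  have h1 : HasDerivAt (fun y : ℝ => 1 + y) 1 x := by
    simpa using (hasDerivAt_id x).const_add 1
  have h2 : HasDerivAt (fun y : ℝ => y / (1 + y)) ((1 * (1 + x) - x * 1) / (1 + x) ^ 2) x :=
    (hasDerivAt_id x).div h1 hne
  have h3 : HasDerivAt (fun y : ℝ => b * Real.log (1 + y)) (b * (1 / (1 + x))) x := by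
    have := (h1.log hne).const_mul b
    simpa using this
  have := h2.sub h3
  refine this.congr_deriv ?_
  field_simp
  ring

-- φ has at most one positive zero
lemma key (b : ℝ) (hb0 : 0 < b) (hb1 : b < 1) (u v : ℝ) (hu : 0 < u) (huv : u < v)
    (h1 : u / (1 + u) - b * Real.log (1 + u) = 0)
    (h2 : v / (1 + v) - b * Real.log (1 + v) = 0) : False := by
  set φ : ℝ → ℝ := fun y => y / (1 + y) - b * Real.log (1 + y) with hφ
  set t : ℝ := 1 / b - 1 with ht
  have htpos : 0 < t := by
    rw [ht]
    have : 1 < 1 / b := (one_lt_div hb0).2 hb1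
    linarith
  have hderiv : ∀ x : ℝ, -1 < x → deriv φ x = (1 - b * (1 + x)) / (1 + x) ^ 2 :=
    fun x hx => (phi_deriv b x hx).deriv
  have hcont : ∀ x : ℝ, -1 < x → ContinuousAt φ x :=
    fun x hx => (phi_deriv b x hx).continuousAt
  have hmono : StrictMonoOn φ (Icc 0 t) := by
    apply strictMonoOn_of_deriv_pos (convex_Icc 0 t)
    · exact fun x hx => (hcont x (by linarith [hx.1])).continuousWithinAt
    · intro x hx
      rw [interior_Icc] at hx
      rw [hderiv x (by linarith [hx.1])]
      apply div_pos
      · have : b * (1 + x) < b * (1 + t) := by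
          apply mul_lt_mul_of_pos_left _ hb0
          linarith [hx.2]
        have h1t : b * (1 + t) = 1 := by
          rw [ht]; field_simp; ring
        linarith
      · have h0x : 0 < 1 + x := by linarith [hx.1]
        positivity
  have hanti : StrictAntiOn φ (Ici t) := by
    apply strictAntiOn_of_deriv_neg (convex_Ici t)
    · exact fun x hx => (hcont x (by simp at hx; linarith)).continuousWithinAt
    · intro x hx
      rw [interior_Ici] at hx
      simp only [mem_Ioi] at hx
      rw [hderiv x (by linarith)]
      apply div_neg_of_neg_of_pos
      · have : b * (1 + t) < b * (1 + x) := by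
          apply mul_lt_mul_of_pos_left _ hb0
          linarith
        have h1t : b * (1 + t) = 1 := by
          rw [ht]; field_simp; ring
        linarith
      · have : 0 < 1 + x := by linarith
        positivity
  have hφ0 : φ 0 = 0 := by simp [hφ]
  -- if a zero lies in (0, t], contradiction with strict mono
  have hzero_gt : ∀ w : ℝ, 0 < w → φ w = 0 → t < w := by
    intro w hw hzw
    by_contra hle
    push_neg at hle
    have := hmono ⟨le_refl 0, htpos.le⟩ ⟨hw.le, hle⟩ hw
    rw [hφ0, hzw] at this
    exact lt_irrefl 0 this
  have htu : t < u := hzero_gt u hu h1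
  have htv : t < v := hzero_gt v (hu.trans huv) h2
  have hlt := hanti (le_of_lt htu) (le_of_lt htv) huv
  have e1' : φ u = 0 := h1
  have e2' : φ v = 0 := h2
  linarith

-- Rolle step for F x = log(1+x)/x^b
lemma rolleF (b : ℝ) (hb0 : 0 < b) (x1 x2 : ℝ) (hx1 : 0 < x1) (h12 : x1 < x2)
    (hF : Real.log (1 + x1) / x1 ^ b = Real.log (1 + x2) / x2 ^ b) :
    ∃ ξ ∈ Ioo x1 x2, ξ / (1 + ξ) - b * Real.log (1 + ξ) = 0 := by
  set F : ℝ → ℝ := fun y => Real.log (1 + y) / y ^ b with hFdef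
  set F' : ℝ → ℝ := fun y =>
    (1 / (1 + y) * y ^ b - Real.log (1 + y) * (b * y ^ (b - 1))) / (y ^ b) ^ 2 with hF'def
  have hDF : ∀ x : ℝ, 0 < x → HasDerivAt F (F' x) x := by
    intro x hx
    have hne : (1 : ℝ) + x ≠ 0 := by linarith
    have h1 : HasDerivAt (fun y : ℝ => 1 + y) 1 x := by
      simpa using (hasDerivAt_id x).const_add 1
    have hlog : HasDerivAt (fun y : ℝ => Real.log (1 + y)) (1 / (1 + x)) x := by
      simpa using h1.log hne
    have hpow : HasDerivAt (fun y : ℝ => y ^ b) (b * x ^ (b - 1)) x :=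
      Real.hasDerivAt_rpow_const (Or.inl hx.ne')
    have hne2 : x ^ b ≠ 0 := by positivity
    exact hlog.div hpow hne2
  obtain ⟨ξ, hmem, hzero⟩ := exists_hasDerivAt_eq_zero h12
    (fun x hx => (hDF x (lt_of_lt_of_le hx1 hx.1)).continuousAt.continuousWithinAt)
    hF (fun x hx => hDF x (hx1.trans hx.1))
  refine ⟨ξ, hmem, ?_⟩
  have hξ : 0 < ξ := hx1.trans hmem.1
  have hne : (1 : ℝ) + ξ ≠ 0 := by linarith
  have hξb : (0:ℝ) < ξ ^ b := by positivity
  have hnum : 1 / (1 + ξ) * ξ ^ b - Real.log (1 + ξ) * (b * ξ ^ (b - 1)) = 0 := by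
    have h2 : ((ξ:ℝ) ^ b) ^ 2 ≠ 0 := by positivity
    have := hzero
    rw [hF'def] at this
    exact (div_eq_zero_iff.mp this).resolve_right h2
  have hsub : ξ ^ (b - 1) = ξ ^ b / ξ := by
    rw [Real.rpow_sub hξ, Real.rpow_one]
  rw [hsub] at hnum
  have hξb' : ξ ^ b ≠ 0 := ne_of_gt hξb
  have : (ξ / (1 + ξ) - b * Real.log (1 + ξ)) * (ξ ^ b / ξ) = 0 := by
    rw [← hnum]; field_simp
  rcases mul_eq_zero.mp this with h | h
  · exact h
  · exfalso
    have : ξ ^ b / ξ > 0 := by positivity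
    linarith

theorem stmt_5 (a b γ₁ γ₂ : ℝ) (ha : 0 < a) (hb0 : 0 < b) (hb1 : b < 1)
    (h1 : 0 < γ₁) (h12 : γ₁ < γ₂)
    (e1 : a * γ₁ ^ b = Real.logb 2 (1 + γ₁))
    (e2 : a * γ₂ ^ b = Real.logb 2 (1 + γ₂)) :
    ∀ γ : ℝ, 0 < γ → γ ≠ γ₁ → γ ≠ γ₂ → a * γ ^ b ≠ Real.logb 2 (1 + γ) := by
  intro γ hγ hne1 hne2 e3
  have hlog2 : Real.log 2 ≠ 0 := ne_of_gt (Real.log_pos (by norm_num))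
  have hFval : ∀ x : ℝ, 0 < x → a * x ^ b = Real.logb 2 (1 + x) →
      Real.log (1 + x) / x ^ b = a * Real.log 2 := by
    intro x hx he
    have hxb : x ^ b ≠ 0 := by positivity
    rw [Real.logb] at he
    field_simp at he ⊢
    linarith
  have F1 := hFval γ₁ h1 e1
  have F2 := hFval γ₂ (h1.trans h12) e2
  have F3 := hFval γ hγ e3
  -- three distinct zeros of F = a log 2; order them and apply Rolle twice
  have main : ∀ y1 y2 y3 : ℝ, 0 < y1 → y1 < y2 → y2 < y3 →
      Real.log (1 + y1) / y1 ^ b = a * Real.log 2 →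
      Real.log (1 + y2) / y2 ^ b = a * Real.log 2 →
      Real.log (1 + y3) / y3 ^ b = a * Real.log 2 → False := by
    intro y1 y2 y3 hy1 h12' h23' g1 g2 g3
    obtain ⟨ξ1, hm1, hz1⟩ := rolleF b hb0 y1 y2 hy1 h12' (g1.trans g2.symm)
    obtain ⟨ξ2, hm2, hz2⟩ := rolleF b hb0 y2 y3 (hy1.trans h12') h23' (g2.trans g3.symm)
    exact key b hb0 hb1 ξ1 ξ2 (hy1.trans hm1.1) (hm1.2.trans hm2.1) hz1 hz2
  rcases lt_trichotomy γ γ₁ with h | h | h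
  · exact main γ γ₁ γ₂ hγ h h12 F3 F1 F2
  · exact hne1 h
  · rcases lt_trichotomy γ γ₂ with h' | h' | h'
    · exact main γ₁ γ γ₂ h1 h h' F1 F3 F2
    · exact hne2 h'
    · exact main γ₁ γ₂ γ h1 h12 h' F1 F2 F3
end

section
/- The interpolated exponent b from the PPF construction satisfies 0 < b < 1 whenever 0 < γ₁ < γ₂: i.e., b = log(log₂(1+γ₂)/log₂(1+γ₁)) / log(γ₂/γ₁) lies strictly between 0 and 1. -/
open Real

theorem stmt_10 (γ₁ γ₂ : ℝ) (h1 : 0 < γ₁) (h12 : γ₁ < γ₂) :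
    0 < (Real.log (Real.logb 2 (1 + γ₂)) - Real.log (Real.logb 2 (1 + γ₁))) /
          (Real.log γ₂ - Real.log γ₁) ∧
    (Real.log (Real.logb 2 (1 + γ₂)) - Real.log (Real.logb 2 (1 + γ₁))) /
          (Real.log γ₂ - Real.log γ₁) < 1 := by
  have hg2 : 0 < γ₂ := h1.trans h12
  have l1 : 0 < Real.log (1 + γ₁) := Real.log_pos (by linarith)
  have l2 : 0 < Real.log (1 + γ₂) := Real.log_pos (by linarith)
  have hb1 : 0 < Real.logb 2 (1 + γ₁) := Real.logb_pos (by norm_num) (by linarith)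
  have hb2 : 0 < Real.logb 2 (1 + γ₂) := Real.logb_pos (by norm_num) (by linarith)
  have hden : 0 < Real.log γ₂ - Real.log γ₁ := by
    have := Real.log_lt_log h1 h12
    linarith
  have hbl : Real.logb 2 (1 + γ₁) < Real.logb 2 (1 + γ₂) :=
    Real.logb_lt_logb (by norm_num) (by linarith) (by linarith)
  have hnum : 0 < Real.log (Real.logb 2 (1 + γ₂)) - Real.log (Real.logb 2 (1 + γ₁)) := by
    have := Real.log_lt_log hb1 hbl
    linarith
  refine ⟨div_pos hnum hden, (div_lt_one hden).mpr ?_⟩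
  -- key concavity inequality: γ₁ * log(1+γ₂) < γ₂ * log(1+γ₁)
  have key : γ₁ * Real.log (1 + γ₂) < γ₂ * Real.log (1 + γ₁) := by
    have hx : (1 : ℝ) ∈ Set.Ioi (0 : ℝ) := by norm_num
    have hy : (1 + γ₂) ∈ Set.Ioi (0 : ℝ) := by simp; linarith
    have hxy : (1 : ℝ) ≠ 1 + γ₂ := by linarith
    have ha : 0 < 1 - γ₁ / γ₂ := by
      rw [sub_pos, div_lt_one hg2]; exact h12
    have hbpos : 0 < γ₁ / γ₂ := div_pos h1 hg2
    have hab : (1 - γ₁ / γ₂) + γ₁ / γ₂ = 1 := by ring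
    have hcc := strictConcaveOn_log_Ioi.2 hx hy hxy ha hbpos hab
    have heq : (1 - γ₁ / γ₂) • (1 : ℝ) + (γ₁ / γ₂) • (1 + γ₂) = 1 + γ₁ := by
      field_simp
      simp only [smul_eq_mul]; field_simp; ring
    rw [heq, Real.log_one] at hcc
    have : (γ₁ / γ₂) * Real.log (1 + γ₂) < Real.log (1 + γ₁) := by
      simpa using hcc
    calc γ₁ * Real.log (1 + γ₂) = γ₂ * ((γ₁ / γ₂) * Real.log (1 + γ₂)) := by
          field_simp
      _ < γ₂ * Real.log (1 + γ₁) := by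
          exact (mul_lt_mul_iff_right₀ hg2).mpr this
  -- rewrite logb as log / log 2
  have hlog2 : Real.log 2 ≠ 0 := by positivity
  have e1 : Real.log (Real.logb 2 (1 + γ₁)) = Real.log (Real.log (1 + γ₁)) - Real.log (Real.log 2) := by
    rw [Real.logb, Real.log_div l1.ne' hlog2]
  have e2 : Real.log (Real.logb 2 (1 + γ₂)) = Real.log (Real.log (1 + γ₂)) - Real.log (Real.log 2) := by
    rw [Real.logb, Real.log_div l2.ne' hlog2]
  rw [e1, e2]
  have hmul : Real.log (γ₁ * Real.log (1 + γ₂)) < Real.log (γ₂ * Real.log (1 + γ₁)) :=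
    Real.log_lt_log (by positivity) key
  rw [Real.log_mul h1.ne' l2.ne', Real.log_mul hg2.ne' l1.ne'] at hmul
  linarith
end

section
/- Strict separation of interpolants: if 0 < γ₁ < γ₂ < γ₃ and (a, b), (a', b') are the PPF interpolation parameters on [γ₁,γ₂] and [γ₂,γ₃] respectively, then b' < b. -/
open Real

noncomputable def fG : ℝ → ℝ := fun x => Real.log (Real.log (1 + Real.exp x))

noncomputable def hG : ℝ → ℝ := fun x => (Real.exp (-x) + 1) * Real.log (1 + Real.exp x)

lemma one_lt_aux (x : ℝ) : (1:ℝ) < 1 + Real.exp x := by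
  linarith [Real.exp_pos x]

lemma log_pos_aux (x : ℝ) : 0 < Real.log (1 + Real.exp x) :=
  Real.log_pos (one_lt_aux x)

lemma hG_pos (x : ℝ) : 0 < hG x := by
  have := Real.exp_pos (-x)
  have := log_pos_aux x
  unfold hG; positivity

lemma hG_deriv (x : ℝ) :
    HasDerivAt hG (1 - Real.exp (-x) * Real.log (1 + Real.exp x)) x := by
  have h1 : HasDerivAt (fun x : ℝ => 1 + Real.exp x) (Real.exp x) x := by
    simpa using (Real.hasDerivAt_exp x).const_add 1
  have h2 : HasDerivAt (fun x : ℝ => Real.log (1 + Real.exp x))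
      (Real.exp x / (1 + Real.exp x)) x :=
    h1.log (by positivity)
  have h3 : HasDerivAt (fun x : ℝ => Real.exp (-x) + 1) (-Real.exp (-x)) x := by
    simpa using ((Real.hasDerivAt_exp (-x)).comp x ((hasDerivAt_id x).neg)).add_const 1
  have h4 := h3.mul h2
  refine (show HasDerivAt hG _ x from h4).congr_deriv ?_
  have hx : (0:ℝ) < 1 + Real.exp x := by positivity
  field_simp [Real.exp_neg, Real.exp_ne_zero]
  have he : Real.exp (-x) * Real.exp x = 1 := by rw [← Real.exp_add, neg_add_cancel, Real.exp_zero]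
  linear_combination he

lemma hG_strictMono : StrictMono hG := by
  apply strictMono_of_deriv_pos
  intro x
  rw [(hG_deriv x).deriv]
  have hlt : Real.log (1 + Real.exp x) < Real.exp x := by
    have := Real.log_lt_sub_one_of_pos (x := 1 + Real.exp x) (by positivity)
      (by linarith [Real.exp_pos x])
    linarith
  have hmul : Real.exp (-x) * Real.log (1 + Real.exp x) < Real.exp (-x) * Real.exp x :=
    mul_lt_mul_of_pos_left hlt (Real.exp_pos _)
  rw [← Real.exp_add] at hmul
  simp at hmul
  linarith

lemma fG_deriv (x : ℝ) : HasDerivAt fG (1 / hG x) x := by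
  have h1 : HasDerivAt (fun x : ℝ => 1 + Real.exp x) (Real.exp x) x := by
    simpa using (Real.hasDerivAt_exp x).const_add 1
  have h2 : HasDerivAt (fun x : ℝ => Real.log (1 + Real.exp x))
      (Real.exp x / (1 + Real.exp x)) x :=
    h1.log (by positivity)
  have h3 := h2.log (ne_of_gt (log_pos_aux x))
  refine h3.congr_deriv ?_
  have hx : (0:ℝ) < 1 + Real.exp x := by positivity
  have hl := log_pos_aux x
  unfold hG
  rw [Real.exp_neg]
  field_simp

lemma fG_strictConcave : StrictConcaveOn ℝ Set.univ fG := by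
  apply StrictAnti.strictConcaveOn_univ_of_deriv
  · exact continuous_iff_continuousAt.2 fun x => (fG_deriv x).continuousAt
  · have hd : deriv fG = fun x => 1 / hG x := funext fun x => (fG_deriv x).deriv
    rw [hd]
    intro x y hxy
    exact one_div_lt_one_div_of_lt (hG_pos x) (hG_strictMono hxy)

lemma fG_log (γ : ℝ) (hγ : 0 < γ) :
    fG (Real.log γ) = Real.log (Real.logb 2 (1 + γ)) + Real.log (Real.log 2) := by
  unfold fG
  rw [Real.exp_log hγ, Real.logb, Real.log_div (ne_of_gt (Real.log_pos (by linarith)))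
    (ne_of_gt (Real.log_pos one_lt_two))]
  ring

theorem stmt_18 (γ₁ γ₂ γ₃ : ℝ) (h1 : 0 < γ₁) (h12 : γ₁ < γ₂) (h23 : γ₂ < γ₃)
    (b : ℝ → ℝ → ℝ)
    (hb : ∀ α β : ℝ, b α β =
      (Real.log (Real.logb 2 (1 + β)) - Real.log (Real.logb 2 (1 + α))) /
        (Real.log β - Real.log α)) :
    b γ₂ γ₃ < b γ₁ γ₂ := by
  have h2 : 0 < γ₂ := h1.trans h12
  have h3 : 0 < γ₃ := h2.trans h23
  have hl12 : Real.log γ₁ < Real.log γ₂ := Real.log_lt_log h1 h12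
  have hl23 : Real.log γ₂ < Real.log γ₃ := Real.log_lt_log h2 h23
  have key := fG_strictConcave.slope_anti_adjacent (Set.mem_univ (Real.log γ₁))
    (Set.mem_univ (Real.log γ₃)) hl12 hl23
  rw [fG_log γ₁ h1, fG_log γ₂ h2, fG_log γ₃ h3] at key
  rw [hb, hb]
  refine lt_of_eq_of_lt ?_ (lt_of_lt_of_eq key ?_) <;> ring
end

section
/- The function G(s) = log(log(1 + e^s)) is strictly concave on ℝ. -/
open Real

private lemma aux_pos (s : ℝ) : (0:ℝ) < 1 + Real.exp s := by positivity

private lemma aux_one (s : ℝ) : (1:ℝ) < 1 + Real.exp s := by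
  have := Real.exp_pos s; linarith

private lemma aux_logpos (s : ℝ) : 0 < Real.log (1 + Real.exp s) :=
  Real.log_pos (aux_one s)

private lemma hasDerivAt_G (s : ℝ) :
    HasDerivAt (fun s : ℝ => Real.log (Real.log (1 + Real.exp s)))
      (Real.exp s / ((1 + Real.exp s) * Real.log (1 + Real.exp s))) s := by
  have h1 : HasDerivAt (fun s : ℝ => 1 + Real.exp s) (Real.exp s) s := by
    simpa using (Real.hasDerivAt_exp s).const_add 1
  have h2 : HasDerivAt (fun s : ℝ => Real.log (1 + Real.exp s))
      (Real.exp s / (1 + Real.exp s)) s := by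
    simpa [div_eq_inv_mul, Function.comp_def] using (Real.hasDerivAt_log (aux_pos s).ne').comp s h1
  have h3 := (Real.hasDerivAt_log (aux_logpos s).ne').comp s h2
  refine h3.congr_deriv ?_
  field_simp

private lemma hasDerivAt_g (s : ℝ) :
    HasDerivAt (fun s : ℝ => Real.exp s / ((1 + Real.exp s) * Real.log (1 + Real.exp s)))
      ((Real.exp s * ((1 + Real.exp s) * Real.log (1 + Real.exp s)) -
        Real.exp s * (Real.exp s * Real.log (1 + Real.exp s) + Real.exp s)) /
        ((1 + Real.exp s) * Real.log (1 + Real.exp s))^2) s := by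
  have h1 : HasDerivAt (fun s : ℝ => 1 + Real.exp s) (Real.exp s) s := by
    simpa using (Real.hasDerivAt_exp s).const_add 1
  have h2 : HasDerivAt (fun s : ℝ => Real.log (1 + Real.exp s))
      (Real.exp s / (1 + Real.exp s)) s := by
    simpa [div_eq_inv_mul, Function.comp_def] using (Real.hasDerivAt_log (aux_pos s).ne').comp s h1
  have hF : HasDerivAt (fun s : ℝ => (1 + Real.exp s) * Real.log (1 + Real.exp s))
      (Real.exp s * Real.log (1 + Real.exp s) + Real.exp s) s := by
    have := h1.mul h2
    refine this.congr_deriv ?_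
    field_simp
  have hden : (1 + Real.exp s) * Real.log (1 + Real.exp s) ≠ 0 :=
    (mul_pos (aux_pos s) (aux_logpos s)).ne'
  exact (Real.hasDerivAt_exp s).div hF hden

private lemma g_anti :
    StrictAnti (fun s : ℝ => Real.exp s / ((1 + Real.exp s) * Real.log (1 + Real.exp s))) := by
  apply strictAnti_of_deriv_neg
  intro s
  rw [(hasDerivAt_g s).deriv]
  have hlt : Real.log (1 + Real.exp s) < Real.exp s := by
    have := Real.log_lt_sub_one_of_pos (aux_pos s) (aux_one s).ne'
    linarith
  have hnum : Real.exp s * ((1 + Real.exp s) * Real.log (1 + Real.exp s)) -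
      Real.exp s * (Real.exp s * Real.log (1 + Real.exp s) + Real.exp s) =
      Real.exp s * (Real.log (1 + Real.exp s) - Real.exp s) := by ring
  rw [hnum]
  apply div_neg_of_neg_of_pos
  · exact mul_neg_of_pos_of_neg (Real.exp_pos s) (by linarith)
  · exact pow_pos (mul_pos (aux_pos s) (aux_logpos s)) 2

theorem stmt_19 :
    StrictConcaveOn ℝ Set.univ (fun s : ℝ => Real.log (Real.log (1 + Real.exp s))) := by
  apply StrictAnti.strictConcaveOn_univ_of_deriv
  · exact (Differentiable.continuous fun s => (hasDerivAt_G s).differentiableAt)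
  · have : deriv (fun s : ℝ => Real.log (Real.log (1 + Real.exp s))) =
        fun s => Real.exp s / ((1 + Real.exp s) * Real.log (1 + Real.exp s)) := by
      funext s; exact (hasDerivAt_G s).deriv
    rw [this]
    exact g_anti
end
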